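/- arXiv:2106.15483 — 3 statements merged into one kernel-verified Lean document; each statement's English description precedes it below -/
import Mathlib

section
/- Let m_e > 0 and m_κ > 0 be real numbers and define m_{eκ±} := √(m_e² + m_κ²/4) ± m_κ/2. Then for every real λ, the 2×2 real matrix M := ![![m_e², m_e·m_κ], ![m_e·m_κ, m_e² + m_κ²]] satisfies det(M − λ·1₂) = (λ − m_{eκ−}²)·(λ − m_{eκ+}²); in particular the eigenvalues of M are exactly m_{eκ−}² and m_{eκ+}². -/
open Real

/-- The mass-squared matrix of the scalar sector of Maxwell–Chern–Simons–Higgs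
theory in the broken phase has characteristic polynomial
`(λ − m_{eκ−}²)(λ − m_{eκ+}²)`; in particular its eigenvalues are exactly
`m_{eκ−}²` and `m_{eκ+}²`. -/
theorem mass_matrix_char_poly (me mκ : ℝ) (hme : 0 < me) (hmκ : 0 < mκ)
    (mekm mekp : ℝ)
    (hmekm : mekm = Real.sqrt (me ^ 2 + mκ ^ 2 / 4) - mκ / 2)
    (hmekp : mekp = Real.sqrt (me ^ 2 + mκ ^ 2 / 4) + mκ / 2)
    (M : Matrix (Fin 2) (Fin 2) ℝ)
    (hM : M = !![me ^ 2, me * mκ; me * mκ, me ^ 2 + mκ ^ 2]) :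
    (∀ lam : ℝ, (M - lam • (1 : Matrix (Fin 2) (Fin 2) ℝ)).det
        = (lam - mekm ^ 2) * (lam - mekp ^ 2)) ∧
    (∀ lam : ℝ, (M - lam • (1 : Matrix (Fin 2) (Fin 2) ℝ)).det = 0 ↔
        lam = mekm ^ 2 ∨ lam = mekp ^ 2) := by
  have hs : Real.sqrt (me ^ 2 + mκ ^ 2 / 4) ^ 2 = me ^ 2 + mκ ^ 2 / 4 :=
    Real.sq_sqrt (by positivity)
  have key : ∀ lam : ℝ, (M - lam • (1 : Matrix (Fin 2) (Fin 2) ℝ)).det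
      = (lam - mekm ^ 2) * (lam - mekp ^ 2) := by
    intro lam
    subst hM hmekm hmekp
    rw [Matrix.one_fin_two]
    simp [Matrix.det_fin_two, Matrix.smul_apply]
    linear_combination (2*lam - Real.sqrt (me ^ 2 + mκ ^ 2 / 4) ^ 2 - me ^ 2 + mκ ^ 2 / 4) * hs
  refine ⟨key, fun lam => ?_⟩
  rw [key lam, mul_eq_zero, sub_eq_zero, sub_eq_zero]
end

section
/- Let m_e > 0 and m_κ > 0, set m_{eκ±} := √(m_e² + m_κ²/4) ± m_κ/2 and u := (1/2)·arctan(2·m_e/m_κ), so that u ∈ (0, π/4) and tan(2u) = 2·m_e/m_κ. Then the rotation matrix U := ![![cos u, sin u], ![−sin u, cos u]] satisfies U ⬝ (diagonal matrix with entries m_{eκ−}², m_{eκ+}²) ⬝ Uᵀ = ![![m_e², m_e·m_κ], ![m_e·m_κ, m_e² + m_κ²]]. In other words, the SO(2) rotation through angle u diagonalizes the mass-squared matrix. -/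
open Real Matrix

/-- The SO(2) rotation through the angle `u = (1/2)·arctan(2mₑ/m_κ)` diagonalizes the
mass-squared matrix of the scalar sector of Maxwell–Chern–Simons–Higgs theory in the
broken phase: `U ⬝ diag(m_{eκ−}², m_{eκ+}²) ⬝ Uᵀ = M`. -/
theorem rotation_diagonalizes_mass_matrix (me mκ : ℝ) (hme : 0 < me) (hmκ : 0 < mκ)
    (mekm mekp u : ℝ)
    (hmekm : mekm = Real.sqrt (me ^ 2 + mκ ^ 2 / 4) - mκ / 2)
    (hmekp : mekp = Real.sqrt (me ^ 2 + mκ ^ 2 / 4) + mκ / 2)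
    (hu : u = (1 / 2) * Real.arctan (2 * me / mκ))
    (U : Matrix (Fin 2) (Fin 2) ℝ)
    (hU : U = !![Real.cos u, Real.sin u; -Real.sin u, Real.cos u]) :
    u ∈ Set.Ioo 0 (π / 4) ∧ Real.tan (2 * u) = 2 * me / mκ ∧
    U * Matrix.diagonal ![mekm ^ 2, mekp ^ 2] * Uᵀ
      = !![me ^ 2, me * mκ; me * mκ, me ^ 2 + mκ ^ 2] := by
  set t : ℝ := 2 * me / mκ with ht
  have htpos : 0 < t := by positivity
  have h2u : 2 * u = Real.arctan t := by rw [hu]; ring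
  have harctan_pos : 0 < Real.arctan t := by rw [← Real.arctan_zero]; exact Real.arctan_strictMono htpos
  have harctan_lt : Real.arctan t < π / 2 := Real.arctan_lt_pi_div_two t
  have hmem : u ∈ Set.Ioo 0 (π / 4) := by
    constructor <;> nlinarith [harctan_pos, harctan_lt, h2u]
  refine ⟨hmem, ?_, ?_⟩
  · rw [h2u, Real.tan_arctan]
  set S : ℝ := Real.sqrt (me ^ 2 + mκ ^ 2 / 4) with hS
  have hSpos : 0 < S := Real.sqrt_pos.mpr (by positivity)
  have hS2 : S ^ 2 = me ^ 2 + mκ ^ 2 / 4 := Real.sq_sqrt (by positivity)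
  have hsq : Real.sqrt (1 + t ^ 2) = 2 * S / mκ := by
    have h1 : 1 + t ^ 2 = (2 * S / mκ) ^ 2 := by
      field_simp [ht]
      rw [ht]; field_simp; nlinarith [hS2]
    rw [h1, Real.sqrt_sq (by positivity)]
  have hcos2 : Real.cos (2 * u) = mκ / (2 * S) := by
    rw [h2u, Real.cos_arctan, hsq]
    field_simp
  have hsin2 : Real.sin (2 * u) = me / S := by
    rw [h2u, Real.sin_arctan, hsq]
    field_simp [ht]
    rw [ht]; field_simp
  have hc2 : Real.cos u ^ 2 = (1 + mκ / (2 * S)) / 2 := by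
    rw [Real.cos_sq, hcos2]; ring
  have hs2 : Real.sin u ^ 2 = (1 - mκ / (2 * S)) / 2 := by
    have := Real.sin_sq_eq_half_sub u
    rw [hcos2] at this; rw [this]; ring
  have hcs : Real.cos u * Real.sin u = me / (2 * S) := by
    have h := Real.sin_two_mul u
    rw [hsin2] at h
    field_simp at h ⊢
    linarith
  have hdiag : Matrix.diagonal ![mekm ^ 2, mekp ^ 2] = !![mekm ^ 2, 0; 0, mekp ^ 2] := by
    ext i j
    fin_cases i <;> fin_cases j <;> simp [Matrix.diagonal_apply]
  have hUT : Uᵀ = !![Real.cos u, -Real.sin u; Real.sin u, Real.cos u] := by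
    rw [hU]; ext i j; fin_cases i <;> fin_cases j <;> simp
  rw [hUT, hU, hdiag, Matrix.mul_fin_two, Matrix.mul_fin_two, hmekm, hmekp]
  have hSne : (4 * S : ℝ) ≠ 0 := by positivity
  have hc2' : 4 * S * Real.cos u ^ 2 = 2 * S + mκ := by
    rw [hc2]; field_simp; ring
  have hs2' : 4 * S * Real.sin u ^ 2 = 2 * S - mκ := by
    rw [hs2]; field_simp; ring
  have hcs' : 2 * S * (Real.cos u * Real.sin u) = me := by
    rw [hcs]; field_simp
  have e00 : (Real.cos u * (S - mκ / 2) ^ 2 + Real.sin u * 0) * Real.cos u +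
      (Real.cos u * 0 + Real.sin u * (S + mκ / 2) ^ 2) * Real.sin u = me ^ 2 := by
    refine mul_left_cancel₀ hSne ?_
    linear_combination (S - mκ / 2) ^ 2 * hc2' + (S + mκ / 2) ^ 2 * hs2' + 4 * S * hS2
  have e01 : (Real.cos u * (S - mκ / 2) ^ 2 + Real.sin u * 0) * -Real.sin u +
      (Real.cos u * 0 + Real.sin u * (S + mκ / 2) ^ 2) * Real.cos u = me * mκ := by
    refine mul_left_cancel₀ hSne ?_
    linear_combination 4 * S * mκ * hcs'
  have e10 : (-Real.sin u * (S - mκ / 2) ^ 2 + Real.cos u * 0) * Real.cos u +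
      (-Real.sin u * 0 + Real.cos u * (S + mκ / 2) ^ 2) * Real.sin u = me * mκ := by
    refine mul_left_cancel₀ hSne ?_
    linear_combination 4 * S * mκ * hcs'
  have e11 : (-Real.sin u * (S - mκ / 2) ^ 2 + Real.cos u * 0) * -Real.sin u +
      (-Real.sin u * 0 + Real.cos u * (S + mκ / 2) ^ 2) * Real.cos u = me ^ 2 + mκ ^ 2 := by
    refine mul_left_cancel₀ hSne ?_
    linear_combination (S - mκ / 2) ^ 2 * hs2' + (S + mκ / 2) ^ 2 * hc2' + 4 * S * hS2
  rw [e00, e01, e10, e11]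
end

section
/- Let S : ℂ → Matrix (Fin N) (Fin N) ℂ be real-differentiable with S(z) invertible for every z ∈ ℂ, and let H₀ : ℂ → Matrix (Fin N) (Fin Nf) ℂ be complex-differentiable (holomorphic) on ℂ. Define H(z) := S(z)⁻¹ · H₀(z) and A_{z̄}(z) := −i·S(z)⁻¹·∂_{z̄}S(z). Then H solves the selfdual BPS vortex equation D_{z̄}H = 0, i.e. ∂_{z̄}H(z) + i·A_{z̄}(z)·H(z) = 0 for every z ∈ ℂ. -/
open Matrix Complex

attribute [local instance] Matrix.frobeniusNormedAddCommGroup Matrix.frobeniusNormedSpace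

/-- The Wirtinger derivative `∂_{z̄} f (w) = (1/2)(Df(w)[1] + i·Df(w)[i])`. -/
noncomputable def dzbar {E : Type*} [NormedAddCommGroup E] [NormedSpace ℂ E]
    (f : ℂ → E) (w : ℂ) : E :=
  (2 : ℂ)⁻¹ • (fderiv ℝ f w 1 + Complex.I • fderiv ℝ f w Complex.I)

attribute [local instance] Matrix.frobeniusNormedRing Matrix.frobeniusNormedAlgebra

section aux

variable {m n p : Type*} [Fintype m] [Fintype n] [Fintype p]

/-- Matrix multiplication as a continuous ℝ-bilinear map (Frobenius norm). -/
noncomputable def mulCLM (m n p : Type*) [Fintype m] [Fintype n] [Fintype p] :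
    Matrix m n ℂ →L[ℝ] Matrix n p ℂ →L[ℝ] Matrix m p ℂ :=
  LinearMap.mkContinuous₂
    (LinearMap.mk₂ ℝ (· * ·) Matrix.add_mul (fun c A B => Matrix.smul_mul c A B)
      Matrix.mul_add (fun c A B => (Matrix.mul_smul A c B)))
    1 (fun A B => by simpa using Matrix.frobenius_norm_mul A B)

lemma mulCLM_apply (A : Matrix m n ℂ) (B : Matrix n p ℂ) : mulCLM m n p A B = A * B := rfl

/-- Wirtinger product rule for matrix-valued functions. -/
lemma dzbar_mul {f : ℂ → Matrix m n ℂ} {g : ℂ → Matrix n p ℂ} {w : ℂ}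
    (hf : DifferentiableAt ℝ f w) (hg : DifferentiableAt ℝ g w) :
    dzbar (fun z => f z * g z) w = dzbar f w * g w + f w * dzbar g w := by
  have hd := (mulCLM m n p).hasFDerivAt_of_bilinear hf.hasFDerivAt hg.hasFDerivAt
  have h1 := hd.fderiv
  have hfun : (fun z => f z * g z) = (fun y => (mulCLM m n p) (f y) (g y)) :=
    funext fun y => (mulCLM_apply _ _).symm
  rw [dzbar, hfun]
  erw [h1]
  simp only [ContinuousLinearMap.add_apply, ContinuousLinearMap.precompR_apply,
    ContinuousLinearMap.precompL_apply, ContinuousLinearMap.compL_apply,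
    ContinuousLinearMap.coe_comp', Function.comp_apply, mulCLM_apply]
  change (2 : ℂ)⁻¹ • (f w * fderiv ℝ g w 1 + fderiv ℝ f w 1 * g w +
    Complex.I • (f w * fderiv ℝ g w Complex.I + fderiv ℝ f w Complex.I * g w)) = _
  simp only [dzbar, smul_add, Matrix.mul_add, Matrix.add_mul, Matrix.smul_mul, Matrix.mul_smul,
    smul_smul]
  ac_rfl

/-- The Wirtinger z̄-derivative of a holomorphic function vanishes. -/
lemma dzbar_of_holomorphic {E : Type*} [NormedAddCommGroup E] [NormedSpace ℂ E]
    {f : ℂ → E} {w : ℂ} (hf : DifferentiableAt ℂ f w) : dzbar f w = 0 := by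
  have h := (hf.hasFDerivAt.restrictScalars ℝ).fderiv
  have hI : fderiv ℝ f w Complex.I = Complex.I • fderiv ℝ f w 1 := by
    rw [h]
    simp only [ContinuousLinearMap.coe_restrictScalars']
    rw [show (Complex.I : ℂ) = Complex.I • (1 : ℂ) by simp,
      ContinuousLinearMap.map_smul]
    simp
  rw [dzbar, hI, smul_smul, Complex.I_mul_I]
  simp

end aux

/-- The moduli-matrix ansatz `H = S⁻¹·H₀(z)`, `A_{z̄} = −i·S⁻¹·∂_{z̄}S` solves the
selfdual BPS vortex equation `D_{z̄}H = ∂_{z̄}H + i·A_{z̄}·H = 0`. -/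
theorem moduli_matrix_solves_selfdual (N Nf : ℕ)
    (S : ℂ → Matrix (Fin N) (Fin N) ℂ) (H₀ : ℂ → Matrix (Fin N) (Fin Nf) ℂ)
    (hS : Differentiable ℝ S) (hSinv : ∀ z : ℂ, IsUnit (S z))
    (hH₀ : Differentiable ℂ H₀)
    (H : ℂ → Matrix (Fin N) (Fin Nf) ℂ) (hH : ∀ z, H z = (S z)⁻¹ * H₀ z)
    (Azbar : ℂ → Matrix (Fin N) (Fin N) ℂ)
    (hA : ∀ z, Azbar z = -Complex.I • ((S z)⁻¹ * dzbar S z)) :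
    ∀ z : ℂ, dzbar H z + Complex.I • (Azbar z * H z) = 0 := by
  intro z
  have hdet : ∀ w, IsUnit (S w).det := fun w => (Matrix.isUnit_iff_isUnit_det _).mp (hSinv w)
  have hH₀R : Differentiable ℝ H₀ := hH₀.restrictScalars ℝ
  -- `H` is real-differentiable
  have hHeq : H = fun w => Ring.inverse (S w) * H₀ w := by
    funext w; rw [hH, Matrix.nonsing_inv_eq_ringInverse]
  have hHdiff : DifferentiableAt ℝ H z := by
    rw [hHeq]
    have h1 : DifferentiableAt ℝ (fun w => Ring.inverse (S w)) z :=
      DifferentiableAt.inverse (𝕜 := ℝ) (hS z) (hSinv z)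
    exact (((mulCLM (Fin N) (Fin N) (Fin Nf)).isBoundedBilinearMap.differentiableAt
      _).comp z (DifferentiableAt.prodMk h1 (hH₀R z)))
  -- `S * H = H₀`
  have hSH : (fun w => S w * H w) = H₀ := by
    funext w
    rw [hH, ← Matrix.mul_assoc, Matrix.mul_nonsing_inv _ (hdet w), Matrix.one_mul]
  have key : dzbar S z * H z + S z * dzbar H z = 0 := by
    rw [← dzbar_mul (hS z) hHdiff, hSH, dzbar_of_holomorphic (hH₀ z)]
  -- compute the gauge term
  have hterm : Complex.I • (Azbar z * H z) = (S z)⁻¹ * (dzbar S z * H z) := by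
    rw [hA, Matrix.smul_mul, smul_smul, mul_neg, Complex.I_mul_I, neg_neg, one_smul,
      Matrix.mul_assoc]
  rw [hterm]
  have h2 : dzbar S z * H z = -(S z * dzbar H z) := by
    rw [eq_neg_iff_add_eq_zero]; exact key
  rw [h2, Matrix.mul_neg, ← Matrix.mul_assoc, Matrix.nonsing_inv_mul _ (hdet z), Matrix.one_mul,
    add_neg_cancel]
end
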